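/- Consider a network of m RFMIOs with feedback inputs u^i = c^i_0 + Σ_{k=1}^m c^i_k y^k, where c^i_0 > 0 and c^i_k ≥ 0. Then there exists at least one equilibrium in the open state space, i.e. a family e = (e^1,...,e^m) with e^i ∈ (0,1)^{n^i} for every i satisfying the network equilibrium equations. -/

import Mathlib

open scoped BigOperators

/-- Extended occupancy vector of an RFM chain with `N + 1` sites:
the input value `u` at the left boundary, the state in the middle,
and `0` at the right boundary. -/
noncomputable def rfmExt {N : ℕ} (u : ℝ) (x : Fin (N + 1) → ℝ) : Fin (N + 3) → ℝ :=
  Fin.cons u (Fin.snoc x 0)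

/-- The flow into site `j` (so `j = 0` is the entry flow `λ₀ u (1 - x₁)`,
`j` internal is `λ_j x_j (1 - x_{j+1})` in 1-based notation,
and `j = N + 1` is the exit flow `λ_n x_n`). -/
noncomputable def rfmFlow {N : ℕ} (lam : Fin (N + 2) → ℝ) (u : ℝ)
    (x : Fin (N + 1) → ℝ) (j : Fin (N + 2)) : ℝ :=
  lam j * rfmExt u x j.castSucc * (1 - rfmExt u x j.succ)

/-- The vector field of a single RFMIO chain with input `u`. -/
noncomputable def rfmVF {N : ℕ} (lam : Fin (N + 2) → ℝ) (u : ℝ)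
    (x : Fin (N + 1) → ℝ) (j : Fin (N + 1)) : ℝ :=
  rfmFlow lam u x j.castSucc - rfmFlow lam u x j.succ

/-- The steady-state equations of an RFM chain with input `u`: all flows are equal,
i.e. `λ₀ u (1-e₁) = λ₁ e₁ (1-e₂) = ⋯ = λ_n e_n`. -/
def rfmSS {N : ℕ} (lam : Fin (N + 2) → ℝ) (u : ℝ) (e : Fin (N + 1) → ℝ) : Prop :=
  ∀ j : Fin (N + 1), rfmFlow lam u e j.castSucc = rfmFlow lam u e j.succ

/-- The input to RFMIO `i` in the network: `u^i = c^i_0 + ∑_k c^i_k y^k`,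
where `y^k = λ^k_{n^k} x^k_{n^k}` is the output of RFMIO `k`. -/
noncomputable def netInput {m : ℕ} {n : Fin m → ℕ}
    (lam : ∀ i : Fin m, Fin (n i + 2) → ℝ)
    (c0 : Fin m → ℝ) (c : Fin m → Fin m → ℝ)
    (z : ∀ i : Fin m, Fin (n i + 1) → ℝ) (i : Fin m) : ℝ :=
  c0 i + ∑ k : Fin m, c i k * (lam k (Fin.last (n k + 1)) * z k (Fin.last (n k)))

/-- The vector field of the network of `m` RFMIOs with feedback connections. -/
noncomputable def netVF {m : ℕ} {n : Fin m → ℕ}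
    (lam : ∀ i : Fin m, Fin (n i + 2) → ℝ)
    (c0 : Fin m → ℝ) (c : Fin m → Fin m → ℝ)
    (z : ∀ i : Fin m, Fin (n i + 1) → ℝ) : ∀ i : Fin m, Fin (n i + 1) → ℝ :=
  fun i => rfmVF (lam i) (netInput lam c0 c z i) (z i)

/-- The network equilibrium equations. -/
def netSS {m : ℕ} {n : Fin m → ℕ}
    (lam : ∀ i : Fin m, Fin (n i + 2) → ℝ)
    (c0 : Fin m → ℝ) (c : Fin m → Fin m → ℝ)
    (e : ∀ i : Fin m, Fin (n i + 1) → ℝ) : Prop :=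
  ∀ i : Fin m, rfmSS (lam i) (netInput lam c0 c e i) (e i)



noncomputable def gseq (L : ℕ → ℝ) (N : ℕ) (R : ℝ) : ℕ → ℝ
  | 0 => R / L (N + 1)
  | k + 1 => R / (L (N - k) * (1 - gseq L N R k))

def Vd (L : ℕ → ℝ) (N : ℕ) (R : ℝ) : Prop :=
  0 < R ∧ ∀ k ≤ N, gseq L N R k < 1

noncomputable def Ufun (L : ℕ → ℝ) (N : ℕ) (R : ℝ) : ℝ :=
  R / (L 0 * (1 - gseq L N R N))

variable {L : ℕ → ℝ} {N : ℕ}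

lemma gpos (hL : ∀ j, 0 < L j) {R : ℝ} (hR : 0 < R) :
    ∀ k, (∀ k' < k, gseq L N R k' < 1) → 0 < gseq L N R k
  | 0, _ => div_pos hR (hL _)
  | k + 1, h => by
      have hk : gseq L N R k < 1 := h k (Nat.lt_succ_self k)
      have : 0 < L (N - k) * (1 - gseq L N R k) := mul_pos (hL _) (by linarith)
      simpa [gseq] using div_pos hR this

lemma gmono (hL : ∀ j, 0 < L j) {R R' : ℝ} (hR : 0 < R) (hRR' : R ≤ R') :
    ∀ k, (∀ k' ≤ k, gseq L N R' k' < 1) → gseq L N R k ≤ gseq L N R' k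
  | 0, _ => by
      have h0 := hL (N + 1)
      simp only [gseq]
      gcongr
  | k + 1, h => by
      have ih := gmono hL hR hRR' k (fun k' hk' => h k' (hk'.trans (Nat.le_succ k)))
      have h1 : gseq L N R' k < 1 := h k (Nat.le_succ k)
      have h2 : gseq L N R k < 1 := lt_of_le_of_lt ih h1
      have hd' : 0 < L (N - k) * (1 - gseq L N R' k) := mul_pos (hL _) (by linarith)
      have hdd : L (N - k) * (1 - gseq L N R' k) ≤ L (N - k) * (1 - gseq L N R k) :=
        mul_le_mul_of_nonneg_left (by linarith) (hL _).le
      simpa [gseq] using div_le_div₀ (by linarith : (0:ℝ) ≤ R') hRR' hd' hdd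

lemma Vd_mono (hL : ∀ j, 0 < L j) {R R' : ℝ} (hR : 0 < R) (hRR' : R ≤ R')
    (hV : Vd L N R') : Vd L N R :=
  ⟨hR, fun k hk => lt_of_le_of_lt
    (gmono hL hR hRR' k (fun k' hk' => hV.2 k' (hk'.trans hk))) (hV.2 k hk)⟩

lemma gsmall (hL : ∀ j, 0 < L j) {l : ℝ} (hl : 0 < l) (hlL : ∀ j ≤ N + 1, l ≤ L j)
    {R : ℝ} (hR : 0 < R) (hRl : R ≤ l / 4) :
    ∀ k, gseq L N R k ≤ 1 / 2
  | 0 => by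
      have h1 : l ≤ L (N + 1) := hlL (N + 1) le_rfl
      have h2 : R / L (N + 1) ≤ (l / 4) / l := div_le_div₀ (by linarith) hRl hl h1
      have h3 : (l / 4) / l = 1 / 4 := by field_simp
      simp only [gseq]; rw [h3] at h2; linarith
  | k + 1 => by
      have ih := gsmall hL hl hlL hR hRl k
      have h1 : l ≤ L (N - k) := hlL (N - k) (by omega)
      have h2 : l / 2 ≤ L (N - k) * (1 - gseq L N R k) := by nlinarith
      have h3 : R / (L (N - k) * (1 - gseq L N R k)) ≤ (l / 4) / (l / 2) :=
        div_le_div₀ (by linarith) hRl (by linarith) h2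
      have h4 : (l / 4) / (l / 2) = 1 / 2 := by field_simp; ring
      simp only [gseq]; rw [h4] at h3; linarith

lemma gcont (hL : ∀ j, 0 < L j) {R₀ : ℝ} :
    ∀ k, (∀ k' < k, gseq L N R₀ k' < 1) → ContinuousAt (fun R => gseq L N R k) R₀
  | 0, _ => by
      simp only [gseq]
      exact (continuous_id.div_const (L (N + 1))).continuousAt
  | k + 1, h => by
      have ih := gcont hL k (fun k' hk' => h k' (hk'.trans (Nat.lt_succ_self k)))
      have hk : gseq L N R₀ k < 1 := h k (Nat.lt_succ_self k)
      have hden : L (N - k) * (1 - gseq L N R₀ k) ≠ 0 :=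
        ne_of_gt (mul_pos (hL _) (by linarith))
      simp only [gseq]
      exact continuousAt_id.div (continuousAt_const.mul (continuousAt_const.sub ih)) hden

lemma Usmono (hL : ∀ j, 0 < L j) {R R' : ℝ} (hR : 0 < R) (hRR' : R < R')
    (hV' : Vd L N R') : Ufun L N R < Ufun L N R' := by
  have h1 : gseq L N R' N < 1 := hV'.2 N le_rfl
  have hgm : gseq L N R N ≤ gseq L N R' N :=
    gmono hL hR hRR'.le N (fun k' hk' => hV'.2 k' hk')
  have hd' : 0 < L 0 * (1 - gseq L N R' N) := mul_pos (hL _) (by linarith)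
  have hdd : L 0 * (1 - gseq L N R' N) ≤ L 0 * (1 - gseq L N R N) :=
    mul_le_mul_of_nonneg_left (by linarith) (hL _).le
  exact div_lt_div₀ hRR' hdd (by linarith : (0:ℝ) ≤ R') hd'

lemma exists_lb (L : ℕ → ℝ) (N : ℕ) (hL : ∀ j, 0 < L j) :
    ∃ l > 0, ∀ j ≤ N + 1, l ≤ L j := by
  obtain ⟨j₀, _, hj₀⟩ := Finset.exists_min_image (Finset.range (N + 2)) L ⟨0, by simp⟩
  exact ⟨L j₀, hL j₀, fun j hj => hj₀ j (Finset.mem_range.2 (by omega))⟩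

lemma exists_ub (L : ℕ → ℝ) (N : ℕ) (hL : ∀ j, 0 < L j) :
    ∃ M > 0, ∀ j ≤ N + 1, L j ≤ M := by
  obtain ⟨j₀, _, hj₀⟩ := Finset.exists_max_image (Finset.range (N + 2)) L ⟨0, by simp⟩
  exact ⟨L j₀, hL j₀, fun j hj => hj₀ j (Finset.mem_range.2 (by omega))⟩

lemma Vd_bound (hL : ∀ j, 0 < L j) {R : ℝ} (hV : Vd L N R) : R < L (N + 1) := by
  have h0 : gseq L N R 0 < 1 := hV.2 0 (Nat.zero_le N)
  have : R / L (N + 1) < 1 := by simpa [gseq] using h0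
  exact (div_lt_one (hL _)).1 this

lemma chain_exists (hL : ∀ j, 0 < L j) {u : ℝ} (hu : 0 < u) :
    ∃ R, Vd L N R ∧ Ufun L N R = u := by
  obtain ⟨l, hl, hlL⟩ := exists_lb L N hL
  -- the small valid point
  set R0 : ℝ := min (l / 4) (u * L 0 / 4) with hR0def
  have hR0pos : 0 < R0 := lt_min (by linarith) (by have := mul_pos hu (hL 0); linarith)
  have hR0l : R0 ≤ l / 4 := min_le_left _ _
  have hR0u : R0 ≤ u * L 0 / 4 := min_le_right _ _
  have hgsm : ∀ k, gseq L N R0 k ≤ 1 / 2 := gsmall hL hl hlL hR0pos hR0l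
  have hV0 : Vd L N R0 := ⟨hR0pos, fun k _ => lt_of_le_of_lt (hgsm k) (by norm_num)⟩
  have hU0 : Ufun L N R0 < u := by
    have hg := hgsm N
    have hDpos : 0 < L 0 * (1 - gseq L N R0 N) := mul_pos (hL 0) (by linarith)
    rw [Ufun, div_lt_iff₀ hDpos]
    nlinarith [hL 0, mul_pos hu (hL 0)]
  by_cases hbig : ∃ R1, Vd L N R1 ∧ u ≤ Ufun L N R1
  · obtain ⟨R1, hV1, hU1⟩ := hbig
    have hR01 : R0 ≤ R1 := by
      by_contra hcon
      push_neg at hcon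
      have := Usmono hL hV1.1 hcon hV0
      linarith
    have hcont : ContinuousOn (Ufun L N) (Set.Icc R0 R1) := by
      intro R hR
      have hVR : Vd L N R := Vd_mono hL (lt_of_lt_of_le hR0pos hR.1) hR.2 hV1
      have hgc : ContinuousAt (fun R => gseq L N R N) R :=
        gcont hL N (fun k' hk' => hVR.2 k' (le_of_lt hk'))
      have hden : L 0 * (1 - gseq L N R N) ≠ 0 :=
        ne_of_gt (mul_pos (hL 0) (by have := hVR.2 N le_rfl; linarith))
      exact (continuousAt_id.div
        (continuousAt_const.mul (continuousAt_const.sub hgc)) hden).continuousWithinAt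
    have hsub := intermediate_value_Icc hR01 hcont
    obtain ⟨R, hRmem, hRu⟩ := hsub ⟨hU0.le, hU1⟩
    exact ⟨R, Vd_mono hL (lt_of_lt_of_le hR0pos hRmem.1) hRmem.2 hV1, hRu⟩
  · exfalso
    push_neg at hbig
    obtain ⟨LM, hLM, hLMub⟩ := exists_ub L N hL
    set S : Set ℝ := {R | Vd L N R} with hSdef
    have hne : R0 ∈ S := hV0
    have hbdd : BddAbove S := ⟨L (N + 1), fun R hR => (Vd_bound hL hR).le⟩
    set Rc : ℝ := sSup S with hRcdef
    have hRcge : R0 ≤ Rc := le_csSup hbdd hne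
    have hRcpos : 0 < Rc := lt_of_lt_of_le hR0pos hRcge
    have hmem : ∀ R, Rc / 2 ≤ R → R < Rc → Vd L N R := by
      intro R h1 h2
      obtain ⟨R', hR'S, hRR'⟩ := exists_lt_of_lt_csSup ⟨R0, hne⟩ h2
      exact Vd_mono hL (by linarith) hRR'.le hR'S
    set eps : ℝ := min (Rc / (2 * LM)) (Rc / (2 * (L 0 * u))) with hepsdef
    have heps : 0 < eps := by
      have h1 : (0:ℝ) < L 0 * u := mul_pos (hL 0) hu
      exact lt_min (div_pos hRcpos (by linarith)) (div_pos hRcpos (by linarith))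
    have hub : ∀ R, Rc / 2 ≤ R → R < Rc → ∀ k ≤ N, gseq L N R k ≤ 1 - eps := by
      intro R h1 h2 k hk
      have hVR : Vd L N R := hmem R h1 h2
      rcases Nat.lt_or_ge k N with hkN | hkN
      · -- use validity of k+1
        have hk1 : gseq L N R (k + 1) < 1 := hVR.2 (k + 1) (by omega)
        have hgk : gseq L N R k < 1 := hVR.2 k hk
        have hD : 0 < L (N - k) * (1 - gseq L N R k) := mul_pos (hL _) (by linarith)
        have hRD : R < L (N - k) * (1 - gseq L N R k) := by
          have := hk1
          simp only [gseq] at this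
          exact (div_lt_one hD).1 this
        by_contra hcon
        push_neg at hcon
        have hLle : L (N - k) ≤ LM := hLMub _ (by omega)
        have h3 : L (N - k) * (1 - gseq L N R k) < L (N - k) * eps :=
          mul_lt_mul_of_pos_left (by linarith) (hL _)
        have h4 : L (N - k) * eps ≤ LM * eps := mul_le_mul_of_nonneg_right hLle heps.le
        have h5 : LM * eps ≤ Rc / 2 := by
          have := min_le_left (Rc / (2 * LM)) (Rc / (2 * (L 0 * u)))
          rw [← hepsdef] at this
          rw [mul_comm]
          calc eps * LM ≤ (Rc / (2 * LM)) * LM := mul_le_mul_of_nonneg_right this hLM.le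
            _ = Rc / 2 := by field_simp
        linarith
      · -- k = N : use Ufun R < u
        have hkN' : k = N := le_antisymm hk hkN
        rw [hkN']
        have hgk : gseq L N R N < 1 := hVR.2 N le_rfl
        have hD : 0 < L 0 * (1 - gseq L N R N) := mul_pos (hL _) (by linarith)
        have hRD : R < u * (L 0 * (1 - gseq L N R N)) := by
          have := hbig R hVR
          rw [Ufun, div_lt_iff₀ hD] at this
          exact this
        by_contra hcon
        push_neg at hcon
        have h3 : u * (L 0 * (1 - gseq L N R N)) < u * (L 0 * eps) := by
          have := mul_lt_mul_of_pos_left (mul_lt_mul_of_pos_left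
            (by linarith : 1 - gseq L N R N < eps) (hL 0)) hu
          exact this
        have h5 : u * (L 0 * eps) ≤ Rc / 2 := by
          have hm := min_le_right (Rc / (2 * LM)) (Rc / (2 * (L 0 * u)))
          rw [← hepsdef] at hm
          have hpos : (0:ℝ) < L 0 * u := mul_pos (hL 0) hu
          calc u * (L 0 * eps) = eps * (L 0 * u) := by ring
            _ ≤ (Rc / (2 * (L 0 * u))) * (L 0 * u) := mul_le_mul_of_nonneg_right hm hpos.le
            _ = Rc / 2 := by rw [div_mul_eq_mul_div, mul_div_mul_right _ _ hpos.ne']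
        linarith
    -- gseq at Rc is bounded by 1 - eps
    have key : ∀ k, k ≤ N → (∀ j, j < k → gseq L N Rc j < 1) → gseq L N Rc k ≤ 1 - eps := by
      intro k hk hprev
      have hct : ContinuousAt (fun R => gseq L N R k) Rc := gcont hL k hprev
      have htd : Filter.Tendsto (fun R => gseq L N R k) (nhdsWithin Rc (Set.Iio Rc))
          (nhds (gseq L N Rc k)) := hct.continuousWithinAt
      have hev : ∀ᶠ R in nhdsWithin Rc (Set.Iio Rc), gseq L N R k ≤ 1 - eps := by
        have hmem' : Set.Ioo (Rc / 2) Rc ∈ nhdsWithin Rc (Set.Iio Rc) :=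
          Ioo_mem_nhdsLT_of_mem ⟨by linarith, le_rfl⟩
        filter_upwards [hmem'] with R hR
        exact hub R hR.1.le hR.2 k hk
      exact le_of_tendsto htd hev
    have hA : ∀ k, k ≤ N → gseq L N Rc k ≤ 1 - eps := by
      intro k
      induction k using Nat.strong_induction_on with
      | _ k ih =>
        intro hk
        exact key k hk (fun j hj => lt_of_le_of_lt (ih j hj (le_trans hj.le hk)) (by linarith))
    -- openness: some R' > Rc is valid
    have hop : ∀ k ≤ N, ∀ᶠ R in nhds Rc, gseq L N R k < 1 := by
      intro k hk
      have hct : ContinuousAt (fun R => gseq L N R k) Rc :=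
        gcont hL k (fun j hj => lt_of_le_of_lt (hA j (le_trans hj.le hk)) (by linarith))
      have hval : gseq L N Rc k < 1 := lt_of_le_of_lt (hA k hk) (by linarith)
      have := hct.preimage_mem_nhds (Iio_mem_nhds hval)
      filter_upwards [this] with R hR
      exact hR
    have hall : ∀ᶠ R in nhds Rc, ∀ k ∈ Finset.range (N + 1), gseq L N R k < 1 :=
      (Filter.eventually_all_finset _).2
        (fun k hkm => hop k (Nat.lt_succ_iff.mp (Finset.mem_range.mp hkm)))
    have h2 : ∀ᶠ R in nhdsWithin Rc (Set.Ioi Rc), Vd L N R := by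
      have := (hall.and (eventually_gt_nhds hRcpos)).filter_mono
        (nhdsWithin_le_nhds (s := Set.Ioi Rc))
      filter_upwards [this] with R hR
      exact ⟨hR.2, fun k hk => hR.1 k (Finset.mem_range.2 (Nat.lt_succ_of_le hk))⟩
    obtain ⟨R', hR'V, hR'gt⟩ := (h2.and eventually_mem_nhdsWithin).exists
    exact absurd (le_csSup hbdd hR'V) (not_le.2 hR'gt)

noncomputable def Lof {N : ℕ} (lam : Fin (N + 2) → ℝ) : ℕ → ℝ :=
  fun j => if h : j < N + 2 then lam ⟨j, h⟩ else 1

lemma Lof_pos {N : ℕ} {lam : Fin (N + 2) → ℝ} (hlam : ∀ j, 0 < lam j) :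
    ∀ j, 0 < Lof lam j := by
  intro j
  unfold Lof
  split
  · exact hlam _
  · exact one_pos

lemma Lof_eq {N : ℕ} (lam : Fin (N + 2) → ℝ) (j : Fin (N + 2)) :
    Lof lam j.val = lam j := by
  simp [Lof, j.isLt, Fin.eta]

-- evaluation of rfmExt
lemma rfmExt_zero {N : ℕ} (u : ℝ) (x : Fin (N + 1) → ℝ) (i : Fin (N + 3)) (hi : i.val = 0) :
    rfmExt u x i = u := by
  have : i = 0 := Fin.ext hi
  subst this
  simp [rfmExt]

lemma rfmExt_mid {N : ℕ} (u : ℝ) (x : Fin (N + 1) → ℝ) (i : Fin (N + 3)) (j : ℕ)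
    (hj : j < N + 1) (hi : i.val = j + 1) :
    rfmExt u x i = x ⟨j, hj⟩ := by
  have h1 : i = Fin.succ ⟨j, Nat.lt_succ_of_lt hj⟩ := Fin.ext (by simp [hi])
  rw [h1, rfmExt, Fin.cons_succ]
  have h2 : (⟨j, Nat.lt_succ_of_lt hj⟩ : Fin (N + 2)) = Fin.castSucc ⟨j, hj⟩ := rfl
  rw [h2, Fin.snoc_castSucc]

lemma rfmExt_last {N : ℕ} (u : ℝ) (x : Fin (N + 1) → ℝ) (i : Fin (N + 3))
    (hi : i.val = N + 2) :
    rfmExt u x i = 0 := by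
  have h1 : i = Fin.succ (Fin.last (N + 1)) := Fin.ext (by simp [hi])
  subst h1
  rw [rfmExt, Fin.cons_succ, Fin.snoc_last]

lemma rfm_solution {N : ℕ} (lam : Fin (N + 2) → ℝ) (hlam : ∀ j, 0 < lam j)
    {R u : ℝ} (hV : Vd (Lof lam) N R) (hU : Ufun (Lof lam) N R = u) :
    ∃ e : Fin (N + 1) → ℝ, (∀ j, e j ∈ Set.Ioo (0 : ℝ) 1) ∧ rfmSS lam u e ∧
      lam (Fin.last (N + 1)) * e (Fin.last N) = R := by
  have hL := Lof_pos (N := N) (lam := lam) hlam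
  set G : ℕ → ℝ := gseq (Lof lam) N R with hGdef
  set e : Fin (N + 1) → ℝ := fun j => G (N - j.val) with hedef
  have hGlt : ∀ k ≤ N, G k < 1 := hV.2
  have hGpos : ∀ k ≤ N, 0 < G k := fun k hk =>
    gpos hL hV.1 k (fun k' hk' => hGlt k' (by omega))
  refine ⟨e, ?_, ?_, ?_⟩
  · intro j
    exact ⟨hGpos _ (by omega), hGlt _ (by omega)⟩
  · -- all flows equal R
    have flow_eq : ∀ j : Fin (N + 2), rfmFlow lam u e j = R := by
      intro j
      rcases j with ⟨jv, hjv⟩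
      rw [rfmFlow]
      have hcs : (Fin.castSucc ⟨jv, hjv⟩ : Fin (N + 3)).val = jv := rfl
      have hsc : (Fin.succ ⟨jv, hjv⟩ : Fin (N + 3)).val = jv + 1 := rfl
      have hlamval : lam ⟨jv, hjv⟩ = Lof lam jv := (Lof_eq lam ⟨jv, hjv⟩).symm
      rcases Nat.eq_zero_or_pos jv with h0 | hpos
      · subst h0
        rw [rfmExt_zero u e _ hcs, rfmExt_mid u e _ 0 (by omega) hsc]
        have he0 : e ⟨0, by omega⟩ = G N := by simp [hedef]
        rw [he0, hlamval, ← hU, Ufun, ← hGdef]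
        have h1 : G N < 1 := hGlt N le_rfl
        have hD : Lof lam 0 * (1 - G N) ≠ 0 := ne_of_gt (mul_pos (hL 0) (by linarith))
        rw [mul_div_assoc', div_mul_eq_mul_div, div_eq_iff hD]
        ring
      · rcases Nat.lt_or_ge jv (N + 1) with hmid | hlast
        · -- internal: 1 ≤ jv ≤ N
          obtain ⟨k, rfl⟩ : ∃ k, jv = k + 1 := ⟨jv - 1, by omega⟩
          rw [rfmExt_mid u e _ k (by omega) hcs, rfmExt_mid u e _ (k + 1) (by omega) hsc]
          have he1 : e ⟨k, by omega⟩ = G (N - k) := rfl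
          have he2 : e ⟨k + 1, by omega⟩ = G (N - (k + 1)) := rfl
          rw [he1, he2, hlamval]
          have hrec : G (N - k) = R / (Lof lam (k + 1) * (1 - G (N - (k + 1)))) := by
            have h1 : N - k = (N - (k + 1)) + 1 := by omega
            have h2 : N - (N - (k + 1)) = k + 1 := by omega
            rw [hGdef, h1]
            simp only [gseq]
            rw [h2]
          rw [hrec]
          have h1 : G (N - (k + 1)) < 1 := hGlt _ (by omega)
          have hD : Lof lam (k + 1) * (1 - G (N - (k + 1))) ≠ 0 :=
            ne_of_gt (mul_pos (hL _) (by linarith))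
          rw [mul_div_assoc', div_mul_eq_mul_div, div_eq_iff hD]
          ring
        · -- exit: jv = N + 1
          have hjN : jv = N + 1 := by omega
          subst hjN
          rw [rfmExt_mid u e _ N (by omega) hcs, rfmExt_last u e _ hsc]
          have he1 : e ⟨N, by omega⟩ = G 0 := by
            show G (N - N) = G 0
            rw [Nat.sub_self]
          rw [he1, hlamval]
          have hG0 : G 0 = R / Lof lam (N + 1) := rfl
          rw [hG0]
          have hne : Lof lam (N + 1) ≠ 0 := ne_of_gt (hL _)
          field_simp
          ring
    intro j
    rw [flow_eq, flow_eq]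
  · -- output
    have he1 : e (Fin.last N) = G 0 := by
      show G (N - N) = G 0
      rw [Nat.sub_self]
    rw [he1]
    have hG0 : G 0 = R / Lof lam (N + 1) := rfl
    have hlamval : lam (Fin.last (N + 1)) = Lof lam (N + 1) :=
      (Lof_eq lam (Fin.last (N + 1))).symm
    rw [hG0, hlamval]
    have hne : Lof lam (N + 1) ≠ 0 := ne_of_gt (hL _)
    field_simp

/-- A network of `m` RFMIOs with feedback inputs
`u^i = c^i_0 + ∑_k c^i_k y^k` (with `c^i_0 > 0`, `c^i_k ≥ 0`) admits at least one
equilibrium in the open state space. -/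
theorem network_equilibrium_exists
    (m : ℕ) (n : Fin m → ℕ)
    (lam : ∀ i : Fin m, Fin (n i + 2) → ℝ)
    (hlam : ∀ (i : Fin m) (j : Fin (n i + 2)), 0 < lam i j)
    (c0 : Fin m → ℝ) (hc0 : ∀ i, 0 < c0 i)
    (c : Fin m → Fin m → ℝ) (hc : ∀ i k, 0 ≤ c i k) :
    ∃ e : ∀ i : Fin m, Fin (n i + 1) → ℝ,
      (∀ i j, e i j ∈ Set.Ioo (0 : ℝ) 1) ∧ netSS lam c0 c e := by
  classical
  have hLpos : ∀ i : Fin m, ∀ j, 0 < Lof (lam i) j := fun i => Lof_pos (hlam i)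
  have hsol : ∀ (i : Fin m) (u : ℝ), 0 < u →
      ∃ R, Vd (Lof (lam i)) (n i) R ∧ Ufun (Lof (lam i)) (n i) R = u :=
    fun i u hu => chain_exists (hLpos i) hu
  set ρ : Fin m → ℝ → ℝ := fun i u => if h : 0 < u then (hsol i u h).choose else 1 with hρdef
  have hρspec : ∀ i u, ∀ hu : 0 < u, Vd (Lof (lam i)) (n i) (ρ i u) ∧
      Ufun (Lof (lam i)) (n i) (ρ i u) = u := by
    intro i u hu
    simp only [hρdef, dif_pos hu]
    exact (hsol i u hu).choose_spec
  have hρpos : ∀ i u, 0 < u → 0 < ρ i u := fun i u hu => (hρspec i u hu).1.1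
  set B : Fin m → ℝ := fun i => Lof (lam i) (n i + 1) with hBdef
  have hBpos : ∀ i, 0 < B i := fun i => hLpos i _
  have hρlt : ∀ i u, 0 < u → ρ i u < B i := fun i u hu =>
    Vd_bound (hLpos i) (hρspec i u hu).1
  have hρmono : ∀ i u u', 0 < u → u ≤ u' → ρ i u ≤ ρ i u' := by
    intro i u u' hu huu'
    by_contra hcon
    push_neg at hcon
    have hu' : 0 < u' := lt_of_lt_of_le hu huu'
    have := Usmono (hLpos i) (hρpos i u' hu') hcon (hρspec i u hu).1
    rw [(hρspec i u hu).2, (hρspec i u' hu').2] at this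
    linarith
  set uIn : (Fin m → ℝ) → Fin m → ℝ := fun y i => c0 i + ∑ k, c i k * y k with huIndef
  have huInpos : ∀ y, (∀ k, 0 ≤ y k) → ∀ i, 0 < uIn y i := by
    intro y hy i
    have : 0 ≤ ∑ k, c i k * y k :=
      Finset.sum_nonneg fun k _ => mul_nonneg (hc i k) (hy k)
    simp only [huIndef]
    linarith [hc0 i]
  have huInmono : ∀ y y', (∀ k, y k ≤ y' k) → ∀ i, uIn y i ≤ uIn y' i := by
    intro y y' h i
    simp only [huIndef]
    have hs : ∀ k ∈ Finset.univ, c i k * y k ≤ c i k * y' k := fun k _ =>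
      mul_le_mul_of_nonneg_left (h k) (hc i k)
    linarith [Finset.sum_le_sum hs]
  set P : Set (Fin m → ℝ) :=
    {y | (∀ i, 0 ≤ y i ∧ y i ≤ B i) ∧ ∀ i, y i ≤ ρ i (uIn y i)} with hPdef
  have h0P : (fun _ => (0 : ℝ)) ∈ P := by
    constructor
    · exact fun i => ⟨le_rfl, (hBpos i).le⟩
    · intro i
      have h0 : 0 < uIn (fun _ => 0) i := huInpos _ (fun _ => le_rfl) i
      exact (hρpos i _ h0).le
  set ys : Fin m → ℝ := fun i => sSup ((fun y => y i) '' P) with hysdef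
  have hbdd : ∀ i, BddAbove ((fun y => y i) '' P) := fun i =>
    ⟨B i, by rintro t ⟨y, hy, rfl⟩; exact (hy.1 i).2⟩
  have hle : ∀ y ∈ P, ∀ i, y i ≤ ys i := fun y hy i => le_csSup (hbdd i) ⟨y, hy, rfl⟩
  have hysnn : ∀ i, 0 ≤ ys i := fun i => hle _ h0P i
  have huys : ∀ i, 0 < uIn ys i := huInpos ys hysnn
  have h4 : ∀ i, ys i ≤ ρ i (uIn ys i) := by
    intro i
    apply csSup_le ((Set.nonempty_of_mem h0P).image _)
    rintro t ⟨y, hy, rfl⟩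
    calc y i ≤ ρ i (uIn y i) := hy.2 i
      _ ≤ ρ i (uIn ys i) := hρmono i _ _ (huInpos y (fun k => (hy.1 k).1) i)
          (huInmono y ys (hle y hy) i)
  set z : Fin m → ℝ := fun i => ρ i (uIn ys i) with hzdef
  have hzP : z ∈ P := by
    refine ⟨fun i => ⟨(hρpos i _ (huys i)).le, (hρlt i _ (huys i)).le⟩, ?_⟩
    intro i
    exact hρmono i _ _ (huys i) (huInmono ys z h4 i)
  have hfix : ∀ i, ys i = ρ i (uIn ys i) := fun i => le_antisymm (h4 i) (hle z hzP i)
  have hsol2 : ∀ i : Fin m, ∃ e : Fin (n i + 1) → ℝ,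
      (∀ j, e j ∈ Set.Ioo (0 : ℝ) 1) ∧ rfmSS (lam i) (uIn ys i) e ∧
      lam i (Fin.last (n i + 1)) * e (Fin.last (n i)) = ys i := by
    intro i
    have hV := (hρspec i _ (huys i)).1
    have hU := (hρspec i _ (huys i)).2
    rw [← hfix i] at hV hU
    exact rfm_solution (lam i) (hlam i) hV hU
  choose e he1 he2 he3 using hsol2
  refine ⟨e, fun i j => he1 i j, ?_⟩
  intro i
  have hin : netInput lam c0 c e i = uIn ys i := by
    simp only [netInput, huIndef]
    congr 1
    apply Finset.sum_congr rfl
    intro k _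
    rw [he3 k]
  rw [hin]
  exact he2 i
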